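/- Let Γ be a countable group acting on a countable set J, let H be a Hilbert space with an orthogonal decomposition H = ⊕_{F ∈ J} K_F into closed subspaces, and let ρ: Γ → U(H) be a unitary representation with ρ(g)(K_F) = K_{g·F} for all g ∈ Γ and F ∈ J. If ρ weakly contains the trivial representation (i.e. there is a sequence of unit vectors ξ_n with ‖ρ(g)ξ_n − ξ_n‖ → 0 for all g ∈ Γ), then there exists a Γ-invariant mean on J. -/

import Mathlib

open Filter
open scoped InnerProductSpace

noncomputable section Stmt5Aux

variable {J H : Type*} [NormedAddCommGroup H] [InnerProductSpace ℂ H] [CompleteSpace H]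

/-- The closed span of the family `K F`, `F ∈ A`. -/
def stmt5SC (K : J → Submodule ℂ H) (A : Set J) : Submodule ℂ H :=
  (⨆ F ∈ A, K F).topologicalClosure

instance stmt5SC_complete (K : J → Submodule ℂ H) (A : Set J) :
    CompleteSpace (stmt5SC K A) :=
  (Submodule.isClosed_topologicalClosure _).completeSpace_coe

lemma stmt5_orth_le {K : J → Submodule ℂ H}
    (hK_orth : ∀ F F' : J, F ≠ F' → ∀ x ∈ K F, ∀ y ∈ K F', ⟪x, y⟫_ℂ = 0)
    {A B : Set J} (hAB : Disjoint A B) : stmt5SC K B ≤ (stmt5SC K A)ᗮ := by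
  have h1 : (⨆ F ∈ B, K F) ≤ (⨆ F ∈ A, K F)ᗮ := by
    refine iSup₂_le fun F hF => ?_
    have h2 : (⨆ F' ∈ A, K F') ≤ (K F)ᗮ := by
      refine iSup₂_le fun F' hF' => fun x hx => ?_
      rw [Submodule.mem_orthogonal]
      intro u hu
      exact hK_orth F F' (fun h => hAB.ne_of_mem hF' hF (h ▸ rfl)) u hu x hx
    exact (K F).le_orthogonal_orthogonal.trans (Submodule.orthogonal_le h2)
  have h3 : (⨆ F ∈ A, K F)ᗮ ≤ (stmt5SC K A)ᗮ := by
    rw [show stmt5SC K A = (⨆ F ∈ A, K F)ᗮᗮ from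
      (Submodule.orthogonal_orthogonal_eq_closure _).symm]
    exact (⨆ F ∈ A, K F)ᗮ.le_orthogonal_orthogonal
  exact ((⨆ F ∈ B, K F).topologicalClosure_minimal h1
    (⨆ F ∈ A, K F).isClosed_orthogonal).trans h3

lemma stmt5_orth_le' (K : J → Submodule ℂ H) (A : Set J) :
    (⨆ F ∈ A, K F)ᗮ ≤ (stmt5SC K A)ᗮ := by
  rw [show stmt5SC K A = (⨆ F ∈ A, K F)ᗮᗮ from
    (Submodule.orthogonal_orthogonal_eq_closure _).symm]
  exact (⨆ F ∈ A, K F)ᗮ.le_orthogonal_orthogonal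

lemma stmt5_mono (K : J → Submodule ℂ H) {A B : Set J} (h : A ⊆ B) :
    stmt5SC K A ≤ stmt5SC K B := by
  refine Submodule.topologicalClosure_minimal _ ?_ (Submodule.isClosed_topologicalClosure _)
  refine (iSup₂_le fun F hF => ?_).trans (Submodule.le_topologicalClosure _)
  exact le_iSup₂ (f := fun (F : J) (_ : F ∈ B) => K F) F (h hF)

/-- Additivity of the projections for disjoint index sets. -/
lemma stmt5_proj_add {K : J → Submodule ℂ H}
    (hK_orth : ∀ F F' : J, F ≠ F' → ∀ x ∈ K F, ∀ y ∈ K F', ⟪x, y⟫_ℂ = 0)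
    {A B : Set J} (hAB : Disjoint A B) (x : H) :
    (Submodule.orthogonalProjection (stmt5SC K (A ∪ B)) x : H)
      = (Submodule.orthogonalProjection (stmt5SC K A) x : H)
        + (Submodule.orthogonalProjection (stmt5SC K B) x : H) := by
  set a : H := (Submodule.orthogonalProjection (stmt5SC K A) x : H) with ha
  set b : H := (Submodule.orthogonalProjection (stmt5SC K B) x : H) with hb
  have haA : a ∈ stmt5SC K A := (Submodule.orthogonalProjection (stmt5SC K A) x).2
  have hbB : b ∈ stmt5SC K B := (Submodule.orthogonalProjection (stmt5SC K B) x).2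
  refine Submodule.eq_starProjection_of_mem_orthogonal ?_ ?_
  · exact Submodule.add_mem _ (stmt5_mono K Set.subset_union_left haA)
      (stmt5_mono K Set.subset_union_right hbB)
  · apply stmt5_orth_le' K (A ∪ B)
    rw [Submodule.mem_orthogonal]
    intro u hu
    rw [show (⨆ F ∈ A ∪ B, K F) = (⨆ F ∈ A, K F) ⊔ (⨆ F ∈ B, K F) from iSup_union,
      Submodule.mem_sup] at hu
    obtain ⟨p, hp, q, hq, rfl⟩ := hu
    have hpA : p ∈ stmt5SC K A := Submodule.le_topologicalClosure _ hp
    have hqB : q ∈ stmt5SC K B := Submodule.le_topologicalClosure _ hq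
    have h1 : ⟪p, x - a⟫_ℂ = 0 :=
      Submodule.inner_right_of_mem_orthogonal hpA
        (Submodule.sub_starProjection_mem_orthogonal (K := stmt5SC K A) x)
    have h2 : ⟪p, b⟫_ℂ = 0 :=
      Submodule.inner_right_of_mem_orthogonal hpA (stmt5_orth_le hK_orth hAB hbB)
    have h3 : ⟪q, x - b⟫_ℂ = 0 :=
      Submodule.inner_right_of_mem_orthogonal hqB
        (Submodule.sub_starProjection_mem_orthogonal (K := stmt5SC K B) x)
    have h4 : ⟪q, a⟫_ℂ = 0 :=
      Submodule.inner_right_of_mem_orthogonal hqB (stmt5_orth_le hK_orth hAB.symm haA)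
    have : ⟪p + q, x - (a + b)⟫_ℂ
        = (⟪p, x - a⟫_ℂ - ⟪p, b⟫_ℂ) + (⟪q, x - b⟫_ℂ - ⟪q, a⟫_ℂ) := by
      simp only [inner_add_left, inner_add_right, inner_sub_right]
      ring
    rw [this, h1, h2, h3, h4]
    ring

end Stmt5Aux

/-- Let `Γ` act on a countable set `J`, let `H = ⊕_{F ∈ J} K_F` be an orthogonal
decomposition into closed subspaces, and let `ρ` be a unitary representation with
`ρ(g) K_F = K_{g • F}`. If `ρ` weakly contains the trivial representation, then
there is a `Γ`-invariant mean on `J`. -/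
theorem stmt5 {Γ J H : Type*} [Group Γ] [Countable Γ] [Countable J] [MulAction Γ J]
    [NormedAddCommGroup H] [InnerProductSpace ℂ H] [CompleteSpace H]
    (K : J → Submodule ℂ H)
    (hK_closed : ∀ F : J, IsClosed (K F : Set H))
    (hK_orth : ∀ F F' : J, F ≠ F' → ∀ x ∈ K F, ∀ y ∈ K F', ⟪x, y⟫_ℂ = 0)
    (hK_dense : closure ((⨆ F : J, K F : Submodule ℂ H) : Set H) = Set.univ)
    (ρ : Γ →* (H ≃ₗᵢ[ℂ] H))
    (hequiv : ∀ (g : Γ) (F : J), (ρ g) '' (K F : Set H) = (K (g • F) : Set H))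
    (halm : ∃ ξ : ℕ → H, (∀ n, ‖ξ n‖ = 1) ∧
      ∀ g : Γ, Tendsto (fun n => ‖ρ g (ξ n) - ξ n‖) atTop (nhds 0)) :
    ∃ m : Set J → ℝ,
      (∀ A : Set J, 0 ≤ m A) ∧
      m Set.univ = 1 ∧
      (∀ A B : Set J, Disjoint A B → m (A ∪ B) = m A + m B) ∧
      (∀ (g : Γ) (A : Set J), m ((fun F => g • F) '' A) = m A) := by
  classical
  obtain ⟨ξ, hξ1, hξg⟩ := halm
  -- the basic quantities
  set f : Set J → ℕ → ℝ :=
    fun A n => ‖(Submodule.orthogonalProjection (stmt5SC K A) (ξ n) : H)‖ ^ 2 with hf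
  -- norm bounds
  have hproj_le : ∀ (A : Set J) (x : H),
      ‖(Submodule.orthogonalProjection (stmt5SC K A) x : H)‖ ≤ ‖x‖ := by
    intro A x
    calc ‖(Submodule.orthogonalProjection (stmt5SC K A) x : H)‖
        = ‖Submodule.orthogonalProjection (stmt5SC K A) x‖ := rfl
      _ ≤ ‖Submodule.orthogonalProjection (stmt5SC K A)‖ * ‖x‖ :=
          (Submodule.orthogonalProjection (stmt5SC K A)).le_opNorm x
      _ ≤ 1 * ‖x‖ := by
          exact mul_le_mul_of_nonneg_right (Submodule.orthogonalProjection_norm_le _) (norm_nonneg _)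
      _ = ‖x‖ := one_mul _
  have hf01 : ∀ A n, f A n ∈ Set.Icc (0 : ℝ) 1 := by
    intro A n
    constructor
    · positivity
    · have := hproj_le A (ξ n)
      rw [hξ1 n] at this
      calc f A n ≤ 1 ^ 2 := by
            exact pow_le_pow_left₀ (norm_nonneg _) this 2
        _ = 1 := one_pow 2
  -- equivariance of the subspaces
  have hSmap : ∀ (g : Γ) (A : Set J),
      stmt5SC K ((fun F => g • F) '' A) = Submodule.map ((ρ g).toLinearEquiv : H →ₗ[ℂ] H) (stmt5SC K A) := by
    intro g A
    have hmapK : ∀ F : J, Submodule.map ((ρ g).toLinearEquiv : H →ₗ[ℂ] H) (K F) = K (g • F) := by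
      intro F
      apply SetLike.ext'
      rw [Submodule.map_coe]
      simpa using hequiv g F
    have hmapN : Submodule.map ((ρ g).toLinearEquiv : H →ₗ[ℂ] H) (⨆ F ∈ A, K F)
        = ⨆ F ∈ (fun F => g • F) '' A, K F := by
      rw [iSup_image]
      simp_rw [Submodule.map_iSup, hmapK]
    have hclos : Submodule.map ((ρ g).toLinearEquiv : H →ₗ[ℂ] H) ((⨆ F ∈ A, K F).topologicalClosure)
        = (Submodule.map ((ρ g).toLinearEquiv : H →ₗ[ℂ] H) (⨆ F ∈ A, K F)).topologicalClosure := by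
      apply SetLike.ext'
      rw [Submodule.map_coe, Submodule.topologicalClosure_coe,
        Submodule.topologicalClosure_coe, Submodule.map_coe]
      exact ((ρ g).toHomeomorph.image_closure _)
    rw [stmt5SC, stmt5SC, hclos, hmapN]
  -- equivariance of the projections
  have hproj_eq : ∀ (g : Γ) (A : Set J) (x : H),
      (Submodule.orthogonalProjection (stmt5SC K ((fun F => g • F) '' A)) (ρ g x) : H)
        = ρ g (Submodule.orthogonalProjection (stmt5SC K A) x : H) := by
    intro g A x
    refine Submodule.eq_starProjection_of_mem_of_inner_eq_zero ?_ ?_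
    · rw [hSmap]
      exact Submodule.mem_map_of_mem (Submodule.orthogonalProjection (stmt5SC K A) x).2
    · intro w hw
      rw [hSmap, Submodule.mem_map] at hw
      obtain ⟨w', hw', rfl⟩ := hw
      have h1 : ρ g x - ρ g (Submodule.orthogonalProjection (stmt5SC K A) x : H)
          = ρ g (x - (Submodule.orthogonalProjection (stmt5SC K A) x : H)) := by
        simp [map_sub]
      rw [show (((ρ g).toLinearEquiv : H →ₗ[ℂ] H) w' : H) = ρ g w' from rfl, h1,
        LinearIsometryEquiv.inner_map_map]
      exact Submodule.starProjection_inner_eq_zero x w' hw'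
  -- approximate invariance
  have hgap : ∀ (g : Γ) (A : Set J),
      Tendsto (fun n => f ((fun F => g • F) '' A) n - f A n) atTop (nhds 0) := by
    intro g A
    refine squeeze_zero_norm (fun n => ?_) (by simpa using (hξg g).const_mul 2)
    ·
      set a := ‖(Submodule.orthogonalProjection (stmt5SC K ((fun F => g • F) '' A)) (ξ n) : H)‖ with hA
      set b := ‖(Submodule.orthogonalProjection (stmt5SC K ((fun F => g • F) '' A)) (ρ g (ξ n)) : H)‖
        with hB
      have hb_eq : b = ‖(Submodule.orthogonalProjection (stmt5SC K A) (ξ n) : H)‖ := by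
        rw [hB, hproj_eq g A (ξ n), LinearIsometryEquiv.norm_map]
      have hab : ‖a - b‖ ≤ ‖ρ g (ξ n) - ξ n‖ := by
        have h1 : ‖a - b‖ ≤ ‖(Submodule.orthogonalProjection (stmt5SC K ((fun F => g • F) '' A)) (ξ n) : H)
            - (Submodule.orthogonalProjection (stmt5SC K ((fun F => g • F) '' A)) (ρ g (ξ n)) : H)‖ :=
          abs_norm_sub_norm_le _ _
        have h2 : ((Submodule.orthogonalProjection (stmt5SC K ((fun F => g • F) '' A)) (ξ n) : H)
            - (Submodule.orthogonalProjection (stmt5SC K ((fun F => g • F) '' A)) (ρ g (ξ n)) : H))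
            = (Submodule.orthogonalProjection (stmt5SC K ((fun F => g • F) '' A)) (ξ n - ρ g (ξ n)) : H) := by
          rw [map_sub]
          rfl
        have h3 := hproj_le ((fun F => g • F) '' A) (ξ n - ρ g (ξ n))
        rw [h2] at h1
        refine h1.trans (h3.trans ?_)
        rw [norm_sub_rev]
      have ha1 : a ≤ 1 := by
        have := hproj_le ((fun F => g • F) '' A) (ξ n)
        rwa [hξ1 n] at this
      have hb1 : b ≤ 1 := by
        have := hproj_le ((fun F => g • F) '' A) (ρ g (ξ n))
        rwa [LinearIsometryEquiv.norm_map, hξ1 n] at this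
      have key : f ((fun F => g • F) '' A) n - f A n = (a - b) * (a + b) := by
        rw [hf]
        simp only
        rw [← hb_eq, ← hA]
        ring
      rw [key, norm_mul]
      have : ‖a + b‖ ≤ 2 := by
        rw [Real.norm_eq_abs, abs_of_nonneg (by positivity)]
        linarith
      calc ‖a - b‖ * ‖a + b‖ ≤ ‖ρ g (ξ n) - ξ n‖ * 2 :=
            mul_le_mul hab this (norm_nonneg _) (norm_nonneg _)
        _ = 2 * ‖ρ g (ξ n) - ξ n‖ := by ring
  -- the ultrafilter
  set ω : Ultrafilter ℕ := Filter.hyperfilter ℕ with hω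
  have hωle : (ω : Filter ℕ) ≤ atTop := Nat.hyperfilter_le_atTop
  have hex : ∀ A : Set J, ∃ x : ℝ, Tendsto (f A) (ω : Filter ℕ) (nhds x) := by
    intro A
    have hle : (Ultrafilter.map (f A) ω : Filter ℝ) ≤ Filter.principal (Set.Icc (0:ℝ) 1) := by
      rw [le_principal_iff, Ultrafilter.mem_coe, Ultrafilter.mem_map]
      exact Filter.mem_of_superset Filter.univ_mem (fun n _ => hf01 A n)
    obtain ⟨x, -, hx⟩ := (isCompact_Icc (a := (0:ℝ)) (b := 1)).ultrafilter_le_nhds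
      (Ultrafilter.map (f A) ω) hle
    exact ⟨x, hx⟩
  set m : Set J → ℝ := fun A => (hex A).choose with hm
  have hmt : ∀ A : Set J, Tendsto (f A) (ω : Filter ℕ) (nhds (m A)) :=
    fun A => (hex A).choose_spec
  refine ⟨m, ?_, ?_, ?_, ?_⟩
  · intro A
    exact ge_of_tendsto (hmt A) (Filter.Eventually.of_forall fun n => (hf01 A n).1)
  · -- m univ = 1
    have hSuniv : stmt5SC K Set.univ = ⊤ := by
      apply SetLike.ext'
      rw [stmt5SC, Submodule.topologicalClosure_coe]
      simp only [Set.mem_univ, iSup_pos, iSup_univ]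
      rw [hK_dense]
      rfl
    have hfu : ∀ n, f Set.univ n = 1 := by
      intro n
      have : (Submodule.orthogonalProjection (stmt5SC K Set.univ) (ξ n) : H) = ξ n := by
        refine Submodule.eq_starProjection_of_mem_orthogonal ?_ ?_
        · rw [hSuniv]; trivial
        · simp
      rw [hf]
      simp only
      rw [this, hξ1 n, one_pow]
    have h1 : Tendsto (f Set.univ) (ω : Filter ℕ) (nhds 1) := by
      have : f Set.univ = fun _ => 1 := funext hfu
      rw [this]
      exact tendsto_const_nhds
    exact tendsto_nhds_unique (hmt Set.univ) h1
  · intro A B hAB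
    have h1 : Tendsto (f (A ∪ B)) (ω : Filter ℕ) (nhds (m A + m B)) := by
      have heq : ∀ n, f (A ∪ B) n = f A n + f B n := by
        intro n
        have hsum := stmt5_proj_add hK_orth hAB (ξ n)
        have horth : ⟪(Submodule.orthogonalProjection (stmt5SC K A) (ξ n) : H),
            (Submodule.orthogonalProjection (stmt5SC K B) (ξ n) : H)⟫_ℂ = 0 :=
          Submodule.inner_right_of_mem_orthogonal
            (Submodule.orthogonalProjection (stmt5SC K A) (ξ n)).2
            (stmt5_orth_le hK_orth hAB (Submodule.orthogonalProjection (stmt5SC K B) (ξ n)).2)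
        rw [hf]
        simp only
        rw [hsum, norm_add_sq (𝕜 := ℂ), horth]
        simp
      have := (hmt A).add (hmt B)
      exact this.congr (fun n => (heq n).symm)
    exact tendsto_nhds_unique (hmt (A ∪ B)) h1
  · intro g A
    have h0 : Tendsto (fun n => f ((fun F => g • F) '' A) n - f A n) (ω : Filter ℕ) (nhds 0) :=
      (hgap g A).mono_left hωle
    have h1 : Tendsto (f ((fun F => g • F) '' A)) (ω : Filter ℕ) (nhds (m A + 0)) := by
      have := (hmt A).add h0
      exact this.congr (fun n => by ring)
    rw [add_zero] at h1
    exact tendsto_nhds_unique (hmt ((fun F => g • F) '' A)) h1
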